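/- arXiv:2503.00891 — 3 statements merged into one kernel-verified Lean document; each statement's English description precedes it below -/
import Mathlib

section
/- Let α ∈ (0, π/2), Δ = Δ(α) and let {T_t}_{t∈Δ} be a C₀-semigroup on a Banach space X. Then for every x ∈ X, the distributionally proximal cell DProx(T, x) = {y ∈ X : for every ε > 0, udens({t ∈ Δ : ‖T_t x − T_t y‖ < ε}) = 1} is a Gδ subset of X. -/
open MeasureTheory Filter Set

noncomputable section

/-- The complex sector `Δ(α) = {r e^{iθ} : r ≥ 0, |θ| ≤ α}`. -/
def sector (α : ℝ) : Set ℂ := {z : ℂ | |Complex.arg z| ≤ α}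

/-- `Δ_r = {t ∈ Δ(α) : |t| < r}`. -/
def sectorBall (α r : ℝ) : Set ℂ := {z ∈ sector α | ‖z‖ < r}

/-- Upper density of a set `A` with respect to the sector `Δ(α)`. -/
def udens (α : ℝ) (A : Set ℂ) : ℝ :=
  limsup (fun r : ℝ =>
    (volume (A ∩ sectorBall α r)).toReal / (volume (sectorBall α r)).toReal) atTop

/-- Lower density of a set `A` with respect to the sector `Δ(α)`. -/
def ldens (α : ℝ) (A : Set ℂ) : ℝ :=
  liminf (fun r : ℝ =>
    (volume (A ∩ sectorBall α r)).toReal / (volume (sectorBall α r)).toReal) atTop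

/-- The filter expressing `|t| → ∞` along `t ∈ A`. -/
def alongAbs (A : Set ℂ) : Filter ℂ :=
  (atTop.comap (fun z : ℂ => ‖z‖)) ⊓ 𝓟 A

/-- A `C₀`-semigroup of continuous linear operators indexed by the sector `Δ(α)`. -/
structure CZeroSemigroup (α : ℝ) (𝕜 X : Type*) [NontriviallyNormedField 𝕜]
    [NormedAddCommGroup X] [NormedSpace 𝕜 X] where
  T : ℂ → X →L[𝕜] X
  map_zero' : T 0 = ContinuousLinearMap.id 𝕜 X
  map_add' : ∀ s ∈ sector α, ∀ t ∈ sector α, T (s + t) = (T s).comp (T t)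
  cont' : ∀ x : X, ContinuousOn (fun t => T t x) (sector α)

variable {α : ℝ} {𝕜 X : Type*} [NontriviallyNormedField 𝕜]
  [NormedAddCommGroup X] [NormedSpace 𝕜 X]

/-- Distributional sensitivity. -/
def DistSensitive (S : CZeroSemigroup α 𝕜 X) : Prop :=
  ∃ δ > (0:ℝ), ∀ x : X, ∀ ε > (0:ℝ), ∃ y : X, ‖x - y‖ < ε ∧
    udens α {t ∈ sector α | δ < ‖S.T t x - S.T t y‖} = 1

/-- Distributionally unbounded vector. -/
def DistUnbounded (S : CZeroSemigroup α 𝕜 X) (x : X) : Prop :=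
  ∃ A : Set ℂ, A ⊆ sector α ∧ MeasurableSet A ∧ udens α A = 1 ∧
    Tendsto (fun t => ‖S.T t x‖) (alongAbs A) atTop

/-- Distributionally semi-irregular vector. -/
def DistSemiIrregular (S : CZeroSemigroup α 𝕜 X) (x : X) : Prop :=
  ∃ A B : Set ℂ, A ⊆ sector α ∧ B ⊆ sector α ∧ MeasurableSet A ∧ MeasurableSet B ∧
    udens α A = 1 ∧ udens α B = 1 ∧
    Tendsto (fun t => ‖S.T t x‖) (alongAbs A) (nhds 0) ∧
    ∃ δ > (0:ℝ), ∀ t ∈ B, δ ≤ ‖S.T t x‖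

/-- Distributionally irregular vector. -/
def DistIrregular (S : CZeroSemigroup α 𝕜 X) (x : X) : Prop :=
  ∃ A B : Set ℂ, A ⊆ sector α ∧ B ⊆ sector α ∧ MeasurableSet A ∧ MeasurableSet B ∧
    udens α A = 1 ∧ udens α B = 1 ∧
    Tendsto (fun t => ‖S.T t x‖) (alongAbs A) (nhds 0) ∧
    Tendsto (fun t => ‖S.T t x‖) (alongAbs B) atTop

/-- Distributionally chaotic pair. -/
def DistChaoticPair (S : CZeroSemigroup α 𝕜 X) (x y : X) : Prop :=
  ∃ δ > (0:ℝ), ∀ ε > (0:ℝ),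
    udens α {t ∈ sector α | ‖S.T t x - S.T t y‖ < ε} = 1 ∧
    udens α {t ∈ sector α | δ < ‖S.T t x - S.T t y‖} = 1

/-- Distributionally scrambled set. -/
def DistScrambled (S : CZeroSemigroup α 𝕜 X) (K : Set X) : Prop :=
  ∀ x ∈ K, ∀ y ∈ K, x ≠ y → DistChaoticPair S x y

namespace Aux2

def ratio (α : ℝ) (A : Set ℂ) (r : ℝ) : ℝ :=
  (volume (A ∩ sectorBall α r)).toReal / (volume (sectorBall α r)).toReal

lemma udens_eq (α : ℝ) (A : Set ℂ) : udens α A = limsup (ratio α A) atTop := rfl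

lemma volume_sectorBall_lt_top (α r : ℝ) : volume (sectorBall α r) < ⊤ := by
  refine lt_of_le_of_lt (measure_mono ?_) (measure_ball_lt_top (x := (0:ℂ)) (r := r))
  intro z hz
  simpa [Metric.mem_ball, Complex.dist_eq] using hz.2

lemma ratio_nonneg (α : ℝ) (A : Set ℂ) (r : ℝ) : 0 ≤ ratio α A r := by
  unfold ratio; positivity

lemma ratio_le_one (α : ℝ) (A : Set ℂ) (r : ℝ) : ratio α A r ≤ 1 := by
  refine div_le_one_of_le₀ ?_ ENNReal.toReal_nonneg
  exact ENNReal.toReal_mono (volume_sectorBall_lt_top α r).ne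
    (measure_mono inter_subset_right)

lemma ratio_mono (α : ℝ) {A B : Set ℂ} (h : A ⊆ B) (r : ℝ) :
    ratio α A r ≤ ratio α B r := by
  unfold ratio
  rcases eq_or_lt_of_le (ENNReal.toReal_nonneg (a := volume (sectorBall α r))) with h0 | h0
  · simp [← h0]
  · refine (div_le_div_iff_of_pos_right h0).mpr ?_
    exact ENNReal.toReal_mono
      (ne_top_of_le_ne_top (volume_sectorBall_lt_top α r).ne
        (measure_mono inter_subset_right))
      (measure_mono (inter_subset_inter_left _ h))

lemma udens_eq_one_iff (α : ℝ) (A : Set ℂ) :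
    udens α A = 1 ↔ ∀ k : ℕ, ∃ᶠ r in atTop, 1 - 1/(k+1 : ℝ) < ratio α A r := by
  have hb : IsBoundedUnder (· ≤ ·) atTop (ratio α A) :=
    isBoundedUnder_of ⟨1, fun r => ratio_le_one α A r⟩
  have hb' : IsBoundedUnder (· ≥ ·) atTop (ratio α A) :=
    isBoundedUnder_of ⟨0, fun r => ratio_nonneg α A r⟩
  have hcb : IsCoboundedUnder (· ≤ ·) atTop (ratio α A) :=
    hb'.isCoboundedUnder_flip
  constructor
  · intro h k
    refine frequently_lt_of_lt_limsup hcb ?_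
    rw [← udens_eq, h]
    have : 0 < 1/(k+1:ℝ) := by positivity
    linarith
  · intro h
    rw [udens_eq]
    refine le_antisymm (limsup_le_of_le hcb (Eventually.of_forall fun r => ratio_le_one α A r)) ?_
    refine le_of_forall_sub_le fun η hη => ?_
    obtain ⟨k, hk⟩ := exists_nat_one_div_lt hη
    have h1 : (1:ℝ) - 1/(k+1) ≤ limsup (ratio α A) atTop :=
      le_limsup_of_frequently_le ((h k).mono fun r hr => hr.le) hb
    linarith

lemma sector_eq {α : ℝ} (hα : 0 < α) (hα' : α < Real.pi / 2) :
    sector α = {z : ℂ | ‖z‖ * Real.cos α ≤ z.re} := by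
  have hαπ : α ≤ Real.pi := by linarith [Real.pi_gt_three]
  ext z
  rcases eq_or_ne z 0 with rfl | hz
  · simp [sector, Complex.arg_zero, hα.le]
  · have habs : 0 < ‖z‖ := by
      simpa [norm_pos_iff] using hz
    have hre : z.re = ‖z‖ * Real.cos (Complex.arg z) := by
      rw [Complex.cos_arg hz]; field_simp
    simp only [sector, mem_setOf_eq, hre]
    rw [mul_le_mul_iff_right₀ habs]
    have h1 : |Complex.arg z| ∈ Icc 0 Real.pi := ⟨abs_nonneg _, Complex.abs_arg_le_pi z⟩
    have h2 : α ∈ Icc 0 Real.pi := ⟨hα.le, hαπ⟩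
    rw [← Real.cos_abs (Complex.arg z)]
    exact (Real.strictAntiOn_cos.le_iff_ge h2 h1).symm

end Aux2

namespace Aux2

variable {α : ℝ} {𝕜 X : Type*} [NontriviallyNormedField 𝕜]
  [NormedAddCommGroup X] [NormedSpace 𝕜 X]

lemma isClosed_sector (hα : 0 < α) (hα' : α < Real.pi / 2) : IsClosed (sector α) := by
  rw [sector_eq hα hα']
  exact isClosed_le (by continuity) (by continuity)

lemma exists_opnorm_bound [CompleteSpace X] (hα : 0 < α) (hα' : α < Real.pi / 2)
    (S : CZeroSemigroup α 𝕜 X) (r : ℝ) :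
    ∃ M : ℝ, 0 ≤ M ∧ ∀ t ∈ sector α ∩ Metric.closedBall 0 r, ‖S.T t‖ ≤ M := by
  set K := sector α ∩ Metric.closedBall (0:ℂ) r with hK
  have hKc : IsCompact K :=
    (isCompact_closedBall 0 r).inter_left (isClosed_sector hα hα')
  have hpt : ∀ z : X, ∃ C, ∀ t : K, ‖S.T t z‖ ≤ C := by
    intro z
    obtain ⟨C, hC⟩ := hKc.exists_bound_of_continuousOn ((S.cont' z).mono inter_subset_left)
    exact ⟨C, fun t => hC t t.2⟩
  obtain ⟨M, hM⟩ := banach_steinhaus (g := fun t : K => S.T t) hpt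
  exact ⟨max M 0, le_max_right _ _, fun t ht => le_trans (hM ⟨t, ht⟩) (le_max_left _ _)⟩

lemma key_open [CompleteSpace X] (hα : 0 < α) (hα' : α < Real.pi / 2)
    (S : CZeroSemigroup α 𝕜 X) (x : X) {ε : ℝ} (hε : 0 < ε) {c : ℝ} (hc : 0 ≤ c) (m : ℝ) :
    IsOpen {y : X | ∃ r, m ≤ r ∧
      c < ratio α {t ∈ sector α | ‖S.T t x - S.T t y‖ < ε} r} := by
  rw [Metric.isOpen_iff]
  rintro y ⟨r, hmr, hr⟩
  set Sb := sectorBall α r with hSb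
  have hSbfin : volume Sb ≠ ⊤ := (volume_sectorBall_lt_top α r).ne
  set A : Set ℂ := {t ∈ sector α | ‖S.T t x - S.T t y‖ < ε} with hA
  have hdpos : 0 < (volume Sb).toReal := by
    rcases (ENNReal.toReal_nonneg (a := volume Sb)).lt_or_eq with h | h
    · exact h
    · exfalso
      have : ratio α A r = 0 := by
        unfold ratio; rw [← hSb, ← h, div_zero]
      rw [this] at hr; exact absurd hr (not_lt.mpr hc)
  -- approximating sets
  set B : ℕ → Set ℂ := fun j => {t ∈ sector α | ‖S.T t x - S.T t y‖ < ε - ε/(j+1)} with hB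
  have hBmono : Monotone B := by
    intro j j' hj t ht
    refine ⟨ht.1, lt_of_lt_of_le ht.2 ?_⟩
    have : ε/(j'+1:ℝ) ≤ ε/(j+1:ℝ) := by
      have hj1 : (j:ℝ)+1 ≤ (j':ℝ)+1 := by exact_mod_cast Nat.succ_le_succ hj
      gcongr
    linarith
  have hBsub : ∀ j, B j ⊆ A := by
    intro j t ht
    refine ⟨ht.1, lt_of_lt_of_le ht.2 ?_⟩
    have : 0 ≤ ε/(j+1:ℝ) := by positivity
    linarith
  have hUnion : (⋃ j, B j ∩ Sb) = A ∩ Sb := by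
    apply subset_antisymm
    · exact iUnion_subset fun j => inter_subset_inter_left _ (hBsub j)
    · rintro t ⟨⟨ht1, ht2⟩, htS⟩
      have hd : 0 < (ε - ‖S.T t x - S.T t y‖) / ε := div_pos (by linarith) hε
      obtain ⟨j, hj⟩ := exists_nat_one_div_lt hd
      refine mem_iUnion.mpr ⟨j, ⟨ht1, ?_⟩, htS⟩
      have h1 : ε / (j+1:ℝ) = ε * (1/(j+1:ℝ)) := by ring
      have h2 : ε * (1/(j+1:ℝ)) < ε * ((ε - ‖S.T t x - S.T t y‖)/ε) :=
        mul_lt_mul_of_pos_left hj hε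
      have h3 : ε * ((ε - ‖S.T t x - S.T t y‖)/ε) = ε - ‖S.T t x - S.T t y‖ := by
        field_simp
      have h4 := h2.trans_eq h3
      linarith
  have hmeas : volume (A ∩ Sb) = ⨆ j, volume (B j ∩ Sb) := by
    rw [← hUnion]
    exact Directed.measure_iUnion fun i j => ⟨max i j,
      inter_subset_inter_left _ (hBmono (le_max_left i j)),
      inter_subset_inter_left _ (hBmono (le_max_right i j))⟩
  have hAfin : volume (A ∩ Sb) ≠ ⊤ :=
    ne_top_of_le_ne_top hSbfin (measure_mono inter_subset_right)
  have hstep : c * (volume Sb).toReal < (volume (A ∩ Sb)).toReal :=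
    (lt_div_iff₀ hdpos).mp hr
  have hofr : ENNReal.ofReal (c * (volume Sb).toReal) < volume (A ∩ Sb) :=
    (ENNReal.ofReal_lt_iff_lt_toReal (by positivity) hAfin).mpr hstep
  rw [hmeas, lt_iSup_iff] at hofr
  obtain ⟨j, hj⟩ := hofr
  have hBfin : volume (B j ∩ Sb) ≠ ⊤ :=
    ne_top_of_le_ne_top hSbfin (measure_mono inter_subset_right)
  have hjr : c * (volume Sb).toReal < (volume (B j ∩ Sb)).toReal :=
    (ENNReal.ofReal_lt_iff_lt_toReal (by positivity) hBfin).mp hj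
  -- operator norm bound
  obtain ⟨M, hM0, hM⟩ := exists_opnorm_bound hα hα' S r
  have hεj : 0 < ε / (j+1:ℝ) := by positivity
  refine ⟨ε/(j+1:ℝ)/(M+1), by positivity, fun y' hy' => ⟨r, hmr, ?_⟩⟩
  have hsub : B j ∩ Sb ⊆ {t ∈ sector α | ‖S.T t x - S.T t y'‖ < ε} ∩ Sb := by
    rintro t ⟨⟨ht1, ht2⟩, htS⟩
    refine ⟨⟨ht1, ?_⟩, htS⟩
    have htK : t ∈ sector α ∩ Metric.closedBall 0 r :=
      ⟨ht1, by simpa [Metric.mem_closedBall, Complex.dist_eq] using htS.2.le⟩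
    have hdist : ‖y - y'‖ < ε/(j+1:ℝ)/(M+1) := by
      rw [← dist_eq_norm, dist_comm]
      exact hy'
    have h1 : ‖S.T t y - S.T t y'‖ ≤ ‖S.T t‖ * ‖y - y'‖ := by
      rw [← map_sub]; exact (S.T t).le_opNorm _
    have h2 : ‖S.T t‖ * ‖y - y'‖ ≤ (M+1) * ‖y - y'‖ :=
      mul_le_mul_of_nonneg_right (le_trans (hM t htK) (by linarith)) (norm_nonneg _)
    have h3 : (M+1) * ‖y - y'‖ < (M+1) * (ε/(j+1:ℝ)/(M+1)) :=
      mul_lt_mul_of_pos_left hdist (by linarith)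
    have h4 : (M+1) * (ε/(j+1:ℝ)/(M+1)) = ε/(j+1:ℝ) := by
      field_simp
    have h5 : ‖S.T t y - S.T t y'‖ < ε/(j+1:ℝ) :=
      (h1.trans h2).trans_lt (h3.trans_eq h4)
    calc ‖S.T t x - S.T t y'‖ ≤ ‖S.T t x - S.T t y‖ + ‖S.T t y - S.T t y'‖ := by
          rw [← dist_eq_norm, ← dist_eq_norm, ← dist_eq_norm]
          exact dist_triangle _ _ _
      _ < (ε - ε/(j+1:ℝ)) + ε/(j+1:ℝ) := by linarith
      _ = ε := by ring
  calc c < (volume (B j ∩ Sb)).toReal / (volume Sb).toReal :=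
        (lt_div_iff₀ hdpos).mpr hjr
    _ ≤ ratio α {t ∈ sector α | ‖S.T t x - S.T t y'‖ < ε} r := by
        unfold ratio
        rw [← hSb]
        refine (div_le_div_iff_of_pos_right hdpos).mpr ?_
        exact ENNReal.toReal_mono
          (ne_top_of_le_ne_top hSbfin (measure_mono inter_subset_right))
          (measure_mono hsub)

end Aux2

/-- The distributionally proximal cell of every point is a `Gδ` subset of `X`. -/
theorem stmt_2 (α : ℝ) (hα : 0 < α) (hα' : α < Real.pi / 2)
    {𝕜 X : Type*} [NontriviallyNormedField 𝕜] [NormedAddCommGroup X] [NormedSpace 𝕜 X]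
    [CompleteSpace X] (S : CZeroSemigroup α 𝕜 X) (x : X) :
    IsGδ {y : X | ∀ ε > (0:ℝ),
      udens α {t ∈ sector α | ‖S.T t x - S.T t y‖ < ε} = 1} := by
  have hset : {y : X | ∀ ε > (0:ℝ), udens α {t ∈ sector α | ‖S.T t x - S.T t y‖ < ε} = 1}
      = ⋂ (n : ℕ) (k : ℕ) (m : ℕ), {y : X | ∃ r, (m:ℝ) ≤ r ∧
          1 - 1/(k+1:ℝ) < Aux2.ratio α {t ∈ sector α | ‖S.T t x - S.T t y‖ < 1/(n+1:ℝ)} r} := by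
    ext y
    simp only [mem_setOf_eq, mem_iInter]
    constructor
    · intro h n k m
      have h1 := (Aux2.udens_eq_one_iff α _).mp (h (1/(n+1:ℝ)) (by positivity)) k
      obtain ⟨r, hrm, hrr⟩ := frequently_atTop.mp h1 (m:ℝ)
      exact ⟨r, hrm, hrr⟩
    · intro h ε hε
      obtain ⟨n, hn⟩ := exists_nat_one_div_lt hε
      rw [Aux2.udens_eq_one_iff]
      intro k
      rw [frequently_atTop]
      intro a
      obtain ⟨r, hrm, hrr⟩ := h n k ⌈a⌉₊
      refine ⟨r, le_trans (Nat.le_ceil a) hrm, lt_of_lt_of_le hrr (Aux2.ratio_mono α ?_ r)⟩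
      intro t ht
      exact ⟨ht.1, ht.2.trans hn⟩
  rw [hset]
  refine IsGδ.iInter fun n => IsGδ.iInter fun k => IsGδ.iInter fun m =>
    (Aux2.key_open hα hα' S x (by positivity) ?_ (m:ℝ)).isGδ
  have h1 : 1/(k+1:ℝ) ≤ 1 := by
    rw [div_le_one (by positivity)]
    linarith [Nat.cast_nonneg (α := ℝ) k]
  linarith
end
end

section
/- Let α ∈ (0, π/2), Δ = Δ(α) and let {T_t}_{t∈Δ} be a C₀-semigroup on a Banach space X. Then the distributionally proximal relation DProx(T) = {(x, y) ∈ X × X : for every ε > 0, udens({t ∈ Δ : ‖T_t x − T_t y‖ < ε}) = 1} is a Gδ subset of X × X. -/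
open MeasureTheory Filter Set

noncomputable section

variable {α : ℝ} {𝕜 X : Type*} [NontriviallyNormedField 𝕜]
  [NormedAddCommGroup X] [NormedSpace 𝕜 X]

lemma aux_sectorBall_subset (α r : ℝ) : sectorBall α r ⊆ Metric.ball (0:ℂ) r := by
  intro z hz
  simpa [Metric.mem_ball, Complex.dist_eq] using hz.2

lemma aux_vol_sB_ne_top (α r : ℝ) : volume (sectorBall α r) ≠ ⊤ :=
  ((measure_mono (aux_sectorBall_subset α r)).trans_lt measure_ball_lt_top).ne

lemma aux_measurableSet_sector (α : ℝ) : MeasurableSet (sector α) :=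
  measurableSet_le Complex.measurable_arg.abs measurable_const

lemma aux_measurableSet_sectorBall (α r : ℝ) : MeasurableSet (sectorBall α r) :=
  (aux_measurableSet_sector α).inter
    (measurableSet_lt continuous_norm.measurable measurable_const)

lemma aux_open_vol_lt [CompleteSpace X] (S : CZeroSemigroup α 𝕜 X) (ε r c : ℝ) :
    IsOpen {p : X × X | c <
      (volume ({t ∈ sector α | ‖S.T t p.1 - S.T t p.2‖ < ε} ∩ sectorBall α r)).toReal} := by
  rw [isOpen_iff_mem_nhds]
  rintro ⟨x0, y0⟩ hp0
  simp only [mem_setOf_eq] at hp0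
  set z0 := x0 - y0 with hz0
  have hrw : ∀ (x y : X) (t : ℂ), S.T t x - S.T t y = S.T t (x - y) := by
    intro x y t; rw [map_sub]
  set E0 : Set ℂ := {t ∈ sector α | ‖S.T t z0‖ < ε} ∩ sectorBall α r with hE0
  have hc : c < (volume E0).toReal := by
    have : {t ∈ sector α | ‖S.T t x0 - S.T t y0‖ < ε} = {t ∈ sector α | ‖S.T t z0‖ < ε} := by
      ext t; simp only [mem_setOf_eq, hrw, ← hz0]
    rwa [this] at hp0
  have hcont : ContinuousOn (fun t => S.T t z0) (sector α) := S.cont' z0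
  obtain ⟨u, hu, huE⟩ := continuousOn_iff'.mp hcont {w : X | ‖w‖ < ε}
    (isOpen_lt continuous_norm continuous_const)
  have hE0m : MeasurableSet E0 := by
    have h1 : {t ∈ sector α | ‖S.T t z0‖ < ε} = u ∩ sector α := by
      rw [← huE]; ext t; simp only [mem_inter_iff, mem_preimage, mem_setOf_eq]; tauto
    rw [hE0, h1]
    exact (hu.measurableSet.inter (aux_measurableSet_sector α)).inter
      (aux_measurableSet_sectorBall α r)
  have hfin : volume E0 ≠ ⊤ := by
    refine ((measure_mono ?_).trans_lt (measure_ball_lt_top (x := (0:ℂ)) (r := r))).ne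
    exact inter_subset_right.trans (aux_sectorBall_subset α r)
  have hd : (0:ℝ) < ((volume E0).toReal - c) / 2 := by linarith
  obtain ⟨K, hKE0, hKc, hKvol⟩ := hE0m.exists_isCompact_lt_add hfin
    (ε := ENNReal.ofReal (((volume E0).toReal - c) / 2)) (ENNReal.ofReal_pos.mpr hd).ne'
  have hKfin : volume K ≠ ⊤ := ((measure_mono hKE0).trans_lt hfin.lt_top).ne
  have hcK : c < (volume K).toReal := by
    have h2 : (volume E0).toReal ≤ (volume K).toReal + ((volume E0).toReal - c) / 2 := by
      have := ENNReal.toReal_mono (a := volume E0)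
        (b := volume K + ENNReal.ofReal (((volume E0).toReal - c) / 2))
        (by simp [hKfin, ENNReal.add_ne_top]) hKvol.le
      rwa [ENNReal.toReal_add hKfin (by simp), ENNReal.toReal_ofReal hd.le] at this
    linarith
  rcases K.eq_empty_or_nonempty with hKe | hKne
  · have hc0 : c < 0 := by simpa [hKe] using hcK
    filter_upwards [univ_mem] with p _
    exact lt_of_lt_of_le hc0 ENNReal.toReal_nonneg
  · have hKs : K ⊆ sector α := fun t ht => (hKE0 ht).1.1
    obtain ⟨t0, ht0K, ht0max⟩ := hKc.exists_isMaxOn hKne ((hcont.mono hKs).norm)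
    set M := ‖S.T t0 z0‖ with hMdef
    have hM : M < ε := (hKE0 ht0K).1.2
    have hbdd : ∀ x : X, ∃ C, ∀ t : K, ‖S.T (t:ℂ) x‖ ≤ C := by
      intro x
      obtain ⟨C, hC⟩ := hKc.exists_bound_of_continuousOn ((S.cont' x).mono hKs)
      exact ⟨C, fun t => hC t t.2⟩
    obtain ⟨C0, hC0⟩ := banach_steinhaus hbdd
    set C := max C0 1 with hCdef
    have hC1 : (0:ℝ) < C := lt_of_lt_of_le one_pos (le_max_right _ _)
    set δ := (ε - M) / C with hδdef
    have hδpos : 0 < δ := div_pos (by linarith) hC1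
    refine Filter.mem_of_superset (Metric.ball_mem_nhds _ (half_pos hδpos)) ?_
    rintro ⟨x, y⟩ hp
    simp only [mem_setOf_eq]
    have hz : ‖(x - y) - z0‖ < δ := by
      have h1 : dist x x0 < δ / 2 ∧ dist y y0 < δ / 2 := by
        constructor
        · exact lt_of_le_of_lt (le_max_left _ _) (by simpa [Prod.dist_eq] using hp)
        · exact lt_of_le_of_lt (le_max_right _ _) (by simpa [Prod.dist_eq] using hp)
      have h2 : ‖(x - y) - z0‖ ≤ ‖x - x0‖ + ‖y - y0‖ := by
        have : (x - y) - z0 = (x - x0) - (y - y0) := by rw [hz0]; abel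
        rw [this]; exact norm_sub_le _ _
      simp only [dist_eq_norm] at h1
      linarith [h1.1, h1.2]
    have hKsub : K ⊆ {t ∈ sector α | ‖S.T t x - S.T t y‖ < ε} ∩ sectorBall α r := by
      intro t ht
      refine ⟨⟨(hKE0 ht).1.1, ?_⟩, (hKE0 ht).2⟩
      have hsplit : S.T t x - S.T t y = S.T t z0 + S.T t ((x - y) - z0) := by
        rw [hrw, ← map_add]; congr 1; abel
      have hTle : ‖S.T t‖ ≤ C := le_trans (hC0 ⟨t, ht⟩) (le_max_left _ _)
      calc ‖S.T t x - S.T t y‖ ≤ ‖S.T t z0‖ + ‖S.T t ((x - y) - z0)‖ := by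
            rw [hsplit]; exact norm_add_le _ _
        _ ≤ M + ‖S.T t‖ * ‖(x - y) - z0‖ := add_le_add (ht0max ht) ((S.T t).le_opNorm _)
        _ ≤ M + C * ‖(x - y) - z0‖ := by
            have := mul_le_mul_of_nonneg_right hTle (norm_nonneg ((x - y) - z0))
            linarith
        _ < M + C * δ := by
            have := mul_lt_mul_of_pos_left hz hC1
            linarith
        _ = ε := by rw [hδdef]; field_simp; ring
    refine lt_of_lt_of_le hcK (ENNReal.toReal_mono ?_ (measure_mono hKsub))
    refine ((measure_mono ?_).trans_lt (measure_ball_lt_top (x := (0:ℂ)) (r := r))).ne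
    exact inter_subset_right.trans (aux_sectorBall_subset α r)

def auxRatio (α : ℝ) (A : Set ℂ) (r : ℝ) : ℝ :=
  (volume (A ∩ sectorBall α r)).toReal / (volume (sectorBall α r)).toReal

lemma aux_udens_eq (α : ℝ) (A : Set ℂ) : udens α A = limsup (auxRatio α A) atTop := rfl

lemma aux_ratio_nonneg (α : ℝ) (A : Set ℂ) (r : ℝ) : 0 ≤ auxRatio α A r :=
  div_nonneg ENNReal.toReal_nonneg ENNReal.toReal_nonneg

lemma aux_ratio_le_one (α : ℝ) (A : Set ℂ) (r : ℝ) : auxRatio α A r ≤ 1 := by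
  rcases eq_or_ne ((volume (sectorBall α r)).toReal) 0 with h | h
  · simp [auxRatio, h]
  · have hD : 0 < (volume (sectorBall α r)).toReal :=
      ENNReal.toReal_nonneg.lt_of_ne (Ne.symm h)
    rw [auxRatio, div_le_one hD]
    exact ENNReal.toReal_mono (aux_vol_sB_ne_top α r) (measure_mono inter_subset_right)

lemma aux_ratio_mono (α : ℝ) {A B : Set ℂ} (r : ℝ) (h : A ⊆ B) :
    auxRatio α A r ≤ auxRatio α B r := by
  unfold auxRatio
  rcases eq_or_ne ((volume (sectorBall α r)).toReal) 0 with h0 | h0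
  · simp [h0]
  · have hD : 0 < (volume (sectorBall α r)).toReal :=
      ENNReal.toReal_nonneg.lt_of_ne (Ne.symm h0)
    have hfin : volume (B ∩ sectorBall α r) ≠ ⊤ :=
      ((measure_mono inter_subset_right).trans_lt (aux_vol_sB_ne_top α r).lt_top).ne
    rw [div_le_div_iff_of_pos_right hD]
    exact ENNReal.toReal_mono hfin (measure_mono (inter_subset_inter_left _ h))

lemma aux_open_ratio [CompleteSpace X] (S : CZeroSemigroup α 𝕜 X) (ε r q : ℝ) (hq : 0 ≤ q) :
    IsOpen {p : X × X |
      q < auxRatio α {t ∈ sector α | ‖S.T t p.1 - S.T t p.2‖ < ε} r} := by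
  by_cases hD : (volume (sectorBall α r)).toReal = 0
  · have : {p : X × X |
        q < auxRatio α {t ∈ sector α | ‖S.T t p.1 - S.T t p.2‖ < ε} r} = ∅ := by
      ext p
      simp only [mem_setOf_eq, mem_empty_iff_false, iff_false, not_lt, auxRatio, hD, div_zero]
      exact hq
    rw [this]; exact isOpen_empty
  · have hD' : 0 < (volume (sectorBall α r)).toReal :=
      ENNReal.toReal_nonneg.lt_of_ne (Ne.symm hD)
    have : {p : X × X |
        q < auxRatio α {t ∈ sector α | ‖S.T t p.1 - S.T t p.2‖ < ε} r} =
        {p : X × X | q * (volume (sectorBall α r)).toReal <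
          (volume ({t ∈ sector α | ‖S.T t p.1 - S.T t p.2‖ < ε} ∩ sectorBall α r)).toReal} := by
      ext p; rw [mem_setOf_eq, mem_setOf_eq, auxRatio, lt_div_iff₀ hD']
    rw [this]
    exact aux_open_vol_lt S ε r _


/-- The distributionally proximal relation is a `Gδ` subset of `X × X`. -/
theorem stmt_3 (α : ℝ) (hα : 0 < α) (hα' : α < Real.pi / 2)
    {𝕜 X : Type*} [NontriviallyNormedField 𝕜] [NormedAddCommGroup X] [NormedSpace 𝕜 X]
    [CompleteSpace X] (S : CZeroSemigroup α 𝕜 X) :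
    IsGδ {p : X × X | ∀ ε > (0:ℝ),
      udens α {t ∈ sector α | ‖S.T t p.1 - S.T t p.2‖ < ε} = 1} := by
  have hbdd : ∀ A : Set ℂ, IsBoundedUnder (· ≤ ·) atTop (auxRatio α A) := fun A =>
    isBoundedUnder_of ⟨1, fun r => aux_ratio_le_one α A r⟩
  have hcob : ∀ A : Set ℂ, IsCoboundedUnder (· ≤ ·) atTop (auxRatio α A) := fun A =>
    isCoboundedUnder_le_of_le atTop (fun r => aux_ratio_nonneg α A r)
  have key : {p : X × X | ∀ ε > (0:ℝ),
      udens α {t ∈ sector α | ‖S.T t p.1 - S.T t p.2‖ < ε} = 1} =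
      ⋂ (m : ℕ) (k : ℕ) (n : ℕ), {p : X × X | ∃ r : ℝ, (n : ℝ) < r ∧
        1 - 1/((k:ℝ)+1) <
          auxRatio α {t ∈ sector α | ‖S.T t p.1 - S.T t p.2‖ < 1/((m:ℝ)+1)} r} := by
    ext p
    simp only [mem_setOf_eq, mem_iInter]
    constructor
    · intro h m k n
      have h1 : udens α {t ∈ sector α | ‖S.T t p.1 - S.T t p.2‖ < 1/((m:ℝ)+1)} = 1 :=
        h _ (by positivity)
      rw [aux_udens_eq] at h1
      have h2 : 1 - 1/((k:ℝ)+1) <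
          limsup (auxRatio α {t ∈ sector α | ‖S.T t p.1 - S.T t p.2‖ < 1/((m:ℝ)+1)}) atTop := by
        rw [h1]
        have : (0:ℝ) < 1/((k:ℝ)+1) := by positivity
        linarith
      have h3 := frequently_lt_of_lt_limsup (hcob _) h2
      obtain ⟨r, hr1, hr2⟩ := (h3.and_eventually (eventually_gt_atTop (n:ℝ))).exists
      exact ⟨r, hr2, hr1⟩
    · intro h ε hε
      obtain ⟨m, hm⟩ := exists_nat_gt (1/ε)
      have hmε : 1/((m:ℝ)+1) < ε := by
        rw [div_lt_iff₀ (by positivity)]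
        have h0 : 1/ε < (m:ℝ) + 1 := hm.trans_le (by linarith)
        have h1 := mul_lt_mul_of_pos_left h0 hε
        rwa [mul_one_div_cancel hε.ne'] at h1
      have hsub : {t ∈ sector α | ‖S.T t p.1 - S.T t p.2‖ < 1/((m:ℝ)+1)} ⊆
          {t ∈ sector α | ‖S.T t p.1 - S.T t p.2‖ < ε} :=
        fun t ht => ⟨ht.1, ht.2.trans hmε⟩
      have hk : ∀ k : ℕ, 1 - 1/((k:ℝ)+1) ≤
          limsup (auxRatio α {t ∈ sector α | ‖S.T t p.1 - S.T t p.2‖ < ε}) atTop := by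
        intro k
        refine le_limsup_of_frequently_le ?_ (hbdd _)
        rw [frequently_atTop]
        intro a
        obtain ⟨n, hn⟩ := exists_nat_ge a
        obtain ⟨r, hr1, hr2⟩ := h m k n
        exact ⟨r, le_of_lt (hn.trans_lt hr1), le_trans (le_of_lt hr2) (aux_ratio_mono α r hsub)⟩
      have hub : limsup (auxRatio α {t ∈ sector α | ‖S.T t p.1 - S.T t p.2‖ < ε}) atTop ≤ 1 :=
        limsup_le_of_le (hcob _) (Eventually.of_forall fun r => aux_ratio_le_one α _ r)
      have hlb : 1 ≤ limsup (auxRatio α {t ∈ sector α | ‖S.T t p.1 - S.T t p.2‖ < ε}) atTop := by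
        by_contra hlt
        push_neg at hlt
        set L := limsup (auxRatio α {t ∈ sector α | ‖S.T t p.1 - S.T t p.2‖ < ε}) atTop with hL
        have h1L : 0 < 1 - L := by linarith
        obtain ⟨k, hkk⟩ := exists_nat_gt (1/(1-L))
        have h2 : 1/((k:ℝ)+1) < 1 - L := by
          rw [div_lt_iff₀ (by positivity)]
          have h3 : 1/(1-L) < (k:ℝ) + 1 := hkk.trans_le (by linarith)
          have h4 := mul_lt_mul_of_pos_left h3 h1L
          rwa [mul_one_div_cancel h1L.ne'] at h4
        have := hk k
        linarith
      rw [aux_udens_eq]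
      exact le_antisymm hub hlb
  rw [key]
  refine .iInter fun m => .iInter fun k => .iInter fun n => ?_
  have hq : (0:ℝ) ≤ 1 - 1/((k:ℝ)+1) := by
    rw [sub_nonneg, div_le_one (by positivity)]
    have : (0:ℝ) ≤ (k:ℝ) := Nat.cast_nonneg k
    linarith
  have huni : {p : X × X | ∃ r : ℝ, (n : ℝ) < r ∧
      1 - 1/((k:ℝ)+1) <
        auxRatio α {t ∈ sector α | ‖S.T t p.1 - S.T t p.2‖ < 1/((m:ℝ)+1)} r} =
      ⋃ (r : ℝ) (_ : (n:ℝ) < r), {p : X × X |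
        1 - 1/((k:ℝ)+1) <
          auxRatio α {t ∈ sector α | ‖S.T t p.1 - S.T t p.2‖ < 1/((m:ℝ)+1)} r} := by
    ext p
    simp only [mem_setOf_eq, mem_iUnion]
    exact ⟨fun ⟨r, h1, h2⟩ => ⟨r, h1, h2⟩, fun ⟨r, h1, h2⟩ => ⟨r, h1, h2⟩⟩
  rw [huni]
  exact (isOpen_iUnion fun r => isOpen_iUnion fun _ =>
    aux_open_ratio S (1/((m:ℝ)+1)) r _ hq).isGδ
end
end

section
/- Let α ∈ (0, π/2), Δ = Δ(α) and let {T_t}_{t∈Δ} be a C₀-semigroup on a Banach space X. Then the following are equivalent: (1) {T_t}_{t∈Δ} is distributionally sensitive; (2) {T_t}_{t∈Δ} admits a distributionally unbounded vector; (3) the set of all distributionally unbounded vectors is a dense Gδ subset of X. -/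
open MeasureTheory Filter Set

noncomputable section

variable {α : ℝ} {𝕜 X : Type*} [NontriviallyNormedField 𝕜]
  [NormedAddCommGroup X] [NormedSpace 𝕜 X]

open Metric

lemma sector_eq {α : ℝ} (hα0 : 0 ≤ α) (hαπ : α ≤ Real.pi) :
    sector α = {z : ℂ | ‖z‖ * Real.cos α ≤ z.re} := by
  ext z
  rcases eq_or_ne z 0 with rfl | hz
  · simp [sector, Complex.arg_zero, hα0]
  · have habs : (0:ℝ) < ‖z‖ := norm_pos_iff.mpr hz
    have harg : |Complex.arg z| ∈ Icc 0 Real.pi := ⟨abs_nonneg _, Complex.abs_arg_le_pi z⟩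
    have hmem : α ∈ Icc 0 Real.pi := ⟨hα0, hαπ⟩
    have key : |Complex.arg z| ≤ α ↔ Real.cos α ≤ Real.cos |Complex.arg z| :=
      (Real.strictAntiOn_cos.le_iff_ge hmem harg).symm
    have hcos : Real.cos |Complex.arg z| = z.re / ‖z‖ := by
      rw [Real.cos_abs, Complex.cos_arg hz]
    simp only [sector, mem_setOf_eq, key, hcos]
    rw [le_div_iff₀ habs, mul_comm]

lemma isClosed_sector {α : ℝ} (hα0 : 0 ≤ α) (hαπ : α ≤ Real.pi) : IsClosed (sector α) := by
  rw [sector_eq hα0 hαπ]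
  exact isClosed_le (by continuity) (Complex.continuous_re)

lemma measurableSet_sector {α : ℝ} (hα0 : 0 ≤ α) (hαπ : α ≤ Real.pi) :
    MeasurableSet (sector α) := (isClosed_sector hα0 hαπ).measurableSet

lemma measurableSet_sectorBall {α : ℝ} (hα0 : 0 ≤ α) (hαπ : α ≤ Real.pi) (r : ℝ) :
    MeasurableSet (sectorBall α r) :=
  (measurableSet_sector hα0 hαπ).inter
    (measurableSet_lt (continuous_norm.measurable) measurable_const)

lemma sectorBall_subset_ball {α r : ℝ} : sectorBall α r ⊆ ball (0:ℂ) r := by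
  intro z hz; simpa [mem_ball, Complex.dist_eq] using hz.2

lemma volume_sectorBall_lt_top {α r : ℝ} : volume (sectorBall α r) < ⊤ :=
  lt_of_le_of_lt (measure_mono sectorBall_subset_ball) measure_ball_lt_top

/-- auxiliary radius factor -/
noncomputable def scFac (α : ℝ) : ℝ := (1 - Real.cos α) / (2 * (1 + Real.cos α))

lemma scFac_pos {α : ℝ} (hα0 : 0 < α) (hαπ : α < Real.pi / 2) : 0 < scFac α := by
  have h1 : Real.cos α < 1 := by
    have := Real.strictAntiOn_cos (show (0:ℝ) ∈ Icc 0 Real.pi by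
      simp [Real.pi_pos.le]) ⟨hα0.le, by linarith [Real.pi_pos]⟩ hα0
    simpa using this
  have h2 : 0 < Real.cos α := Real.cos_pos_of_mem_Ioo ⟨by linarith [Real.pi_pos], hαπ⟩
  have : 0 < 1 + Real.cos α := by linarith
  apply div_pos <;> linarith

lemma scFac_lt_half {α : ℝ} (hα0 : 0 < α) (hαπ : α < Real.pi / 2) : scFac α < 1/2 := by
  have h2 : 0 < Real.cos α := Real.cos_pos_of_mem_Ioo ⟨by linarith [Real.pi_pos], hαπ⟩
  have h3 : Real.cos α ≤ 1 := Real.cos_le_one α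
  rw [scFac, div_lt_iff₀ (by linarith)]
  nlinarith

lemma ball_subset_sectorBall {α r : ℝ} (hα0 : 0 < α) (hαπ : α < Real.pi / 2) (hr : 0 < r) :
    ball ((r/2 : ℝ) : ℂ) (scFac α * r) ⊆ sectorBall α r := by
  have hcpos := scFac_pos hα0 hαπ
  have hchalf := scFac_lt_half hα0 hαπ
  have hcos : 0 < Real.cos α := Real.cos_pos_of_mem_Ioo ⟨by linarith [Real.pi_pos], hαπ⟩
  have hkey : (scFac α * r + r/2) * Real.cos α = r/2 - scFac α * r := by
    have h1 : (0:ℝ) < 1 + Real.cos α := by linarith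
    rw [scFac]; field_simp; ring
  intro z hz
  rw [mem_ball, Complex.dist_eq] at hz
  have habsz : ‖z‖ < scFac α * r + r/2 := by
    calc ‖z‖ ≤ ‖z - (r/2:ℝ)‖ + ‖((r/2:ℝ):ℂ)‖ := by
          simpa using norm_add_le (z - (r/2:ℝ)) ((r/2:ℝ):ℂ)
      _ < scFac α * r + r/2 := by
          have : ‖((r/2:ℝ):ℂ)‖ = r/2 := by
            rw [Complex.norm_real, Real.norm_eq_abs]; exact abs_of_pos (by linarith)
          linarith [this ▸ hz]
  have hre : r/2 - scFac α * r < z.re := by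
    have h1 : |z.re - r/2| ≤ ‖z - (r/2:ℝ)‖ := by
      have := Complex.abs_re_le_norm (z - (r/2:ℝ))
      simpa using this
    have := abs_lt.mp (lt_of_le_of_lt h1 hz)
    linarith [this.1]
  constructor
  · rw [sector_eq hα0.le (by linarith [Real.pi_pos])]
    have : ‖z‖ * Real.cos α < (scFac α * r + r/2) * Real.cos α :=
      mul_lt_mul_of_pos_right habsz hcos
    rw [hkey] at this
    exact le_of_lt (lt_trans this hre)
  · calc ‖z‖ < scFac α * r + r/2 := habsz
      _ < r := by nlinarith [scFac_lt_half hα0 hαπ]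

lemma volume_sectorBall_pos {α r : ℝ} (hα0 : 0 < α) (hαπ : α < Real.pi / 2) (hr : 0 < r) :
    0 < volume (sectorBall α r) :=
  lt_of_lt_of_le (measure_ball_pos _ _ (mul_pos (scFac_pos hα0 hαπ) hr))
    (measure_mono (ball_subset_sectorBall hα0 hαπ hr))

lemma volume_sectorBall_tendsto {α : ℝ} (hα0 : 0 < α) (hαπ : α < Real.pi / 2) :
    Filter.Tendsto (fun r : ℝ => (volume (sectorBall α r)).toReal) atTop atTop := by
  have hc := scFac_pos hα0 hαπ
  have hball : ∀ r : ℝ, 0 < r →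
      ENNReal.ofReal ((scFac α * r)^2) * volume (ball (0:ℂ) 1) ≤ volume (sectorBall α r) := by
    intro r hr
    have h := measure_mono (μ := (volume : Measure ℂ)) (ball_subset_sectorBall hα0 hαπ hr)
    rwa [Measure.addHaar_ball (volume : Measure ℂ) _ (mul_pos hc hr).le, Complex.finrank_real_complex] at h
  have hKpos : 0 < (volume (ball (0:ℂ) 1)).toReal :=
    ENNReal.toReal_pos (measure_ball_pos _ _ one_pos).ne' measure_ball_lt_top.ne
  apply tendsto_atTop_mono' _ (_ : ∀ᶠ r in atTop, (scFac α * r)^2 * (volume (ball (0:ℂ) 1)).toReal ≤ (volume (sectorBall α r)).toReal)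
  · have h1 : Filter.Tendsto (fun r : ℝ => (scFac α * r)^2) atTop atTop := by
      have := (tendsto_id (α := ℝ)).const_mul_atTop hc
      exact (tendsto_pow_atTop (two_ne_zero)).comp this
    exact h1.atTop_mul_const hKpos
  · filter_upwards [eventually_gt_atTop 0] with r hr
    have h := hball r hr
    have := ENNReal.toReal_mono volume_sectorBall_lt_top.ne h
    rwa [ENNReal.toReal_mul, ENNReal.toReal_ofReal (by positivity)] at this

def dratio (α : ℝ) (A : Set ℂ) (r : ℝ) : ℝ :=
  (volume (A ∩ sectorBall α r)).toReal / (volume (sectorBall α r)).toReal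

lemma udens_def (α : ℝ) (A : Set ℂ) : udens α A = limsup (dratio α A) atTop := rfl

lemma dratio_nonneg {α : ℝ} {A : Set ℂ} {r : ℝ} : 0 ≤ dratio α A r := by
  unfold dratio; positivity

lemma dratio_le_one {α : ℝ} {A : Set ℂ} {r : ℝ} : dratio α A r ≤ 1 := by
  unfold dratio
  rcases eq_or_ne (volume (sectorBall α r)).toReal 0 with h | h
  · simp [h]
  · exact div_le_one_of_le₀ (ENNReal.toReal_mono volume_sectorBall_lt_top.ne
      (measure_mono inter_subset_right)) ENNReal.toReal_nonneg

lemma dratio_mono {α : ℝ} {A B : Set ℂ} (h : A ⊆ B) (r : ℝ) : dratio α A r ≤ dratio α B r := by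
  unfold dratio
  gcongr
  exact (lt_of_le_of_lt (measure_mono inter_subset_right) volume_sectorBall_lt_top).ne

lemma dratio_bdd {α : ℝ} {A : Set ℂ} : IsBoundedUnder (· ≤ ·) atTop (dratio α A) :=
  isBoundedUnder_of ⟨1, fun _ => dratio_le_one⟩

lemma dratio_cobdd {α : ℝ} {A : Set ℂ} : IsCoboundedUnder (· ≤ ·) atTop (dratio α A) :=
  (isBoundedUnder_of ⟨0, fun _ => dratio_nonneg⟩ :
    IsBoundedUnder (· ≥ ·) atTop (dratio α A)).isCoboundedUnder_le

lemma udens_le_one {α : ℝ} {A : Set ℂ} : udens α A ≤ 1 := by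
  rw [udens_def]
  exact limsup_le_of_le dratio_cobdd (Eventually.of_forall fun _ => dratio_le_one)

lemma udens_mono {α : ℝ} {A B : Set ℂ} (h : A ⊆ B) : udens α A ≤ udens α B := by
  rw [udens_def, udens_def]
  exact limsup_le_limsup (Eventually.of_forall (dratio_mono h)) dratio_cobdd dratio_bdd

lemma udens_eq_one_of_frequently {α : ℝ} {A : Set ℂ}
    (h : ∀ ε > (0:ℝ), ∃ᶠ r in atTop, 1 - ε < dratio α A r) : udens α A = 1 := by
  refine le_antisymm udens_le_one ?_
  rw [udens_def]
  refine le_of_forall_sub_le fun ε hε => ?_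
  exact le_limsup_of_frequently_le ((h ε hε).mono fun r hr => hr.le) dratio_bdd

lemma frequently_of_udens_eq_one {α : ℝ} {A : Set ℂ} (h : udens α A = 1) :
    ∀ ε > (0:ℝ), ∃ᶠ r in atTop, 1 - ε < dratio α A r := by
  intro ε hε
  have : (1:ℝ) - ε < limsup (dratio α A) atTop := by rw [← udens_def, h]; linarith
  exact frequently_lt_of_lt_limsup dratio_cobdd this

lemma exists_dratio {α : ℝ} {A : Set ℂ} (h : udens α A = 1) {ε : ℝ} (hε : 0 < ε) (R : ℝ) :
    ∃ r, R ≤ r ∧ 1 - ε < dratio α A r := by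
  have := (frequently_atTop.mp (frequently_of_udens_eq_one h ε hε)) R
  tauto

lemma udens_diff_closedBall {α : ℝ} (hα0 : 0 < α) (hαπ : α < Real.pi / 2) {A : Set ℂ}
    (h : udens α A = 1) (R : ℝ) : udens α (A \ Metric.closedBall 0 R) = 1 := by
  apply udens_eq_one_of_frequently
  intro ε hε
  set VC := (volume (Metric.closedBall (0:ℂ) R)).toReal with hVC
  have hVC0 : 0 ≤ VC := ENNReal.toReal_nonneg
  have hVCfin : volume (Metric.closedBall (0:ℂ) R) ≠ ⊤ := measure_closedBall_lt_top.ne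
  have hev : ∀ᶠ r in atTop, 2 * VC / ε + 1 ≤ (volume (sectorBall α r)).toReal :=
    (volume_sectorBall_tendsto hα0 hαπ).eventually_ge_atTop _
  refine ((frequently_of_udens_eq_one h (ε/2) (by linarith)).and_eventually hev).mono ?_
  rintro r ⟨h1, h2⟩
  set V := (volume (sectorBall α r)).toReal with hV
  have hd0 : 0 ≤ 2 * VC / ε := div_nonneg (by linarith) hε.le
  have hV0 : 0 < V := by linarith
  -- key : vol(A∩Δr) ≤ vol((A\C)∩Δr) + VC
  have hkey : (volume (A ∩ sectorBall α r)).toReal ≤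
      (volume ((A \ Metric.closedBall 0 R) ∩ sectorBall α r)).toReal + VC := by
    have hsub : A ∩ sectorBall α r ⊆
        ((A \ Metric.closedBall 0 R) ∩ sectorBall α r) ∪ Metric.closedBall 0 R := by
      intro z hz
      by_cases hzC : z ∈ Metric.closedBall (0:ℂ) R
      · exact Or.inr hzC
      · exact Or.inl ⟨⟨hz.1, hzC⟩, hz.2⟩
    have h1' := (measure_mono (μ := (volume : Measure ℂ)) hsub).trans (measure_union_le _ _)
    have hfin : volume (((A \ Metric.closedBall 0 R) ∩ sectorBall α r)) ≠ ⊤ :=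
      (lt_of_le_of_lt (measure_mono inter_subset_right) volume_sectorBall_lt_top).ne
    calc (volume (A ∩ sectorBall α r)).toReal
        ≤ ((volume ((A \ Metric.closedBall 0 R) ∩ sectorBall α r)) +
            volume (Metric.closedBall (0:ℂ) R)).toReal :=
          ENNReal.toReal_mono (by
            rw [ENNReal.add_ne_top]; exact ⟨hfin, hVCfin⟩) h1'
      _ = _ := ENNReal.toReal_add hfin hVCfin
  have hstep : dratio α A r ≤ dratio α (A \ Metric.closedBall 0 R) r + VC / V := by
    rw [dratio, dratio, ← hV, ← add_div]
    exact div_le_div_of_nonneg_right hkey hV0.le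
  have hVCsmall : VC / V ≤ ε / 2 := by
    rw [div_le_iff₀ hV0]
    have e1 : (2 * VC / ε) * ε = 2 * VC := div_mul_cancel₀ _ hε.ne'
    have e2 : (2 * VC / ε + 1) * ε ≤ V * ε := mul_le_mul_of_nonneg_right h2 hε.le
    nlinarith
  linarith [hstep, h1, hVCsmall]

lemma exists_abs_ge_of_udens_eq_one {α : ℝ} (hα0 : 0 < α) (hαπ : α < Real.pi / 2) {A : Set ℂ}
    (h : udens α A = 1) (R : ℝ) : ∃ z ∈ A, R ≤ ‖z‖ := by
  by_contra hc
  push_neg at hc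
  set VC := (volume (sectorBall α R)).toReal with hVC
  have hev : ∀ᶠ r in atTop, 2 * VC + 2 ≤ (volume (sectorBall α r)).toReal :=
    (volume_sectorBall_tendsto hα0 hαπ).eventually_ge_atTop _
  obtain ⟨r, h1, h2⟩ := ((frequently_of_udens_eq_one h (1/2) (by norm_num)).and_eventually hev).exists
  set V := (volume (sectorBall α r)).toReal with hV
  have hVC0 : 0 ≤ VC := ENNReal.toReal_nonneg
  have hV0 : 0 < V := by linarith
  have hsub : A ∩ sectorBall α r ⊆ sectorBall α R := by
    intro z hz
    exact ⟨hz.2.1, lt_of_lt_of_le (hc z hz.1) (le_refl R)⟩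
  have hnum : (volume (A ∩ sectorBall α r)).toReal ≤ VC :=
    ENNReal.toReal_mono volume_sectorBall_lt_top.ne (measure_mono hsub)
  have hd : dratio α A r ≤ VC / V := by
    rw [dratio, ← hV]
    exact div_le_div_of_nonneg_right hnum hV0.le
  have hsm : VC / V < 1/2 := by
    rw [div_lt_iff₀ hV0]
    linarith
  linarith [hd, h1, hsm]

lemma alongAbs_neBot {α : ℝ} (hα0 : 0 < α) (hαπ : α < Real.pi / 2) {A : Set ℂ}
    (h : udens α A = 1) : (alongAbs A).NeBot := by
  rw [alongAbs, inf_principal_neBot_iff]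
  intro U hU
  rw [Filter.mem_comap] at hU
  obtain ⟨t, ht, hsub⟩ := hU
  obtain ⟨b, hb⟩ := mem_atTop_sets.mp ht
  obtain ⟨z, hzA, hz⟩ := exists_abs_ge_of_udens_eq_one hα0 hαπ h b
  exact ⟨z, hsub (hb _ hz), hzA⟩

lemma eventually_alongAbs_iff {A : Set ℂ} {p : ℂ → Prop} :
    (∀ᶠ t in alongAbs A, p t) ↔ ∃ R, ∀ t ∈ A, R ≤ ‖t‖ → p t := by
  rw [alongAbs, eventually_inf_principal, eventually_comap, eventually_atTop]
  constructor
  · rintro ⟨R, hR⟩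
    exact ⟨R, fun t htA habs => hR _ habs t rfl htA⟩
  · rintro ⟨R, hR⟩
    exact ⟨R, fun b hb t ht htA => hR t htA (ht ▸ hb)⟩

-- new material
lemma contOn_norm (S : CZeroSemigroup α 𝕜 X) (x : X) :
    ContinuousOn (fun t => ‖S.T t x‖) (sector α) := (S.cont' x).norm

lemma isClosed_levelLe (hα0 : 0 ≤ α) (hαπ : α ≤ Real.pi) (S : CZeroSemigroup α 𝕜 X) (x : X)
    (m : ℝ) : IsClosed {t ∈ sector α | ‖S.T t x‖ ≤ m} := by
  have := (contOn_norm S x).preimage_isClosed_of_isClosed (isClosed_sector hα0 hαπ)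
    (isClosed_Iic (a := m))
  convert this using 1
  rfl

lemma isClosed_levelGe (hα0 : 0 ≤ α) (hαπ : α ≤ Real.pi) (S : CZeroSemigroup α 𝕜 X) (x : X)
    (m : ℝ) : IsClosed {t ∈ sector α | m ≤ ‖S.T t x‖} := by
  have := (contOn_norm S x).preimage_isClosed_of_isClosed (isClosed_sector hα0 hαπ)
    (isClosed_Ici (a := m))
  convert this using 1
  rfl

lemma measurableSet_levelGt (hα0 : 0 ≤ α) (hαπ : α ≤ Real.pi) (S : CZeroSemigroup α 𝕜 X) (x : X)
    (m : ℝ) : MeasurableSet {t ∈ sector α | m < ‖S.T t x‖} := by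
  have heq : {t ∈ sector α | m < ‖S.T t x‖} =
      sector α \ {t ∈ sector α | ‖S.T t x‖ ≤ m} := by
    ext z
    simp only [mem_setOf_eq, mem_diff, not_and, not_le]
    constructor
    · rintro ⟨h1, h2⟩; exact ⟨h1, fun _ => h2⟩
    · rintro ⟨h1, h2⟩; exact ⟨h1, h2 h1⟩
  rw [heq]
  exact (isClosed_sector hα0 hαπ).measurableSet.diff
    (isClosed_levelLe hα0 hαπ S x m).measurableSet

lemma exists_opNorm_bound (hα0 : 0 ≤ α) (hαπ : α ≤ Real.pi) [CompleteSpace X]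
    (S : CZeroSemigroup α 𝕜 X) (r : ℝ) :
    ∃ M : ℝ, 0 ≤ M ∧ ∀ t ∈ sector α ∩ Metric.closedBall 0 r, ‖S.T t‖ ≤ M := by
  set K := sector α ∩ Metric.closedBall (0:ℂ) r with hK
  have hKc : IsCompact K := (isCompact_closedBall _ _).inter_left (isClosed_sector hα0 hαπ)
  have hpt : ∀ x : X, ∃ C, ∀ i : K, ‖S.T i x‖ ≤ C := by
    intro x
    obtain ⟨C, hC⟩ := hKc.exists_bound_of_continuousOn ((S.cont' x).mono inter_subset_left)
    exact ⟨C, fun i => hC i i.2⟩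
  obtain ⟨C', hC'⟩ := banach_steinhaus (g := fun i : K => S.T i) hpt
  exact ⟨max C' 0, le_max_right _ _, fun t ht => le_trans (hC' ⟨t, ht⟩) (le_max_left _ _)⟩

lemma sensitive_of_unbounded (hα0 : 0 < α) (hαπ : α < Real.pi / 2)
    (S : CZeroSemigroup α 𝕜 X) (h : ∃ x, DistUnbounded S x) : DistSensitive S := by
  obtain ⟨x₀, A, hAsub, hAmeas, hAud, htend⟩ := h
  refine ⟨1, one_pos, fun x ε hε => ?_⟩
  have hne : (alongAbs A).NeBot := alongAbs_neBot hα0 hαπ hAud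
  have hx₀ : x₀ ≠ 0 := by
    rintro rfl
    obtain ⟨t, ht⟩ := (htend.eventually_ge_atTop 2).exists
    simp only [map_zero, norm_zero] at ht
    linarith
  obtain ⟨c, hc0, hc⟩ := NormedField.exists_norm_lt 𝕜
    (div_pos hε (norm_pos_iff.mpr hx₀))
  have hcne : c ≠ 0 := norm_pos_iff.mp hc0
  refine ⟨x + c • x₀, ?_, ?_⟩
  · have he : x - (x + c • x₀) = -(c • x₀) := by abel
    rw [he, norm_neg, norm_smul]
    calc ‖c‖ * ‖x₀‖ < (ε / ‖x₀‖) * ‖x₀‖ :=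
        mul_lt_mul_of_pos_right hc (norm_pos_iff.mpr hx₀)
      _ = ε := div_mul_cancel₀ _ (norm_ne_zero_iff.mpr hx₀)
  · have hev : ∀ᶠ t in alongAbs A, 2 / ‖c‖ ≤ ‖S.T t x₀‖ := htend.eventually_ge_atTop _
    obtain ⟨R, hR⟩ := eventually_alongAbs_iff.mp hev
    have hsub : A \ Metric.closedBall 0 R ⊆
        {t ∈ sector α | 1 < ‖S.T t x - S.T t (x + c • x₀)‖} := by
      rintro t ⟨htA, htR⟩
      refine ⟨hAsub htA, ?_⟩
      have he : S.T t x - S.T t (x + c • x₀) = -(c • S.T t x₀) := by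
        rw [map_add, _root_.map_smul]; abel
      rw [he, norm_neg, norm_smul]
      have habs : R ≤ ‖t‖ := by
        by_contra hcon; push_neg at hcon
        exact htR (by simpa [Metric.mem_closedBall, Complex.dist_eq] using hcon.le)
      have hb := hR t htA habs
      calc (1:ℝ) < 2 := one_lt_two
        _ = ‖c‖ * (2 / ‖c‖) := by field_simp
        _ ≤ ‖c‖ * ‖S.T t x₀‖ := mul_le_mul_of_nonneg_left hb hc0.le
    refine le_antisymm udens_le_one ?_
    calc (1:ℝ) = udens α (A \ Metric.closedBall 0 R) :=
        (udens_diff_closedBall hα0 hαπ hAud R).symm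
      _ ≤ _ := udens_mono hsub

lemma sensitive_amp (S : CZeroSemigroup α 𝕜 X) (hS : DistSensitive S) (M : ℝ) :
    ∀ x : X, ∀ ε > (0:ℝ), ∃ y : X, ‖x - y‖ < ε ∧
      udens α {t ∈ sector α | M < ‖S.T t x - S.T t y‖} = 1 := by
  obtain ⟨δ, hδ, hsens⟩ := hS
  intro x ε hε
  obtain ⟨c, hc⟩ := NormedField.exists_lt_norm 𝕜 ((|M| + 1) / δ)
  have hc0 : 0 < ‖c‖ := lt_of_le_of_lt (by positivity) hc
  have hcne : c ≠ 0 := norm_pos_iff.mp hc0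
  obtain ⟨y', hy', hud⟩ := hsens (c⁻¹ • x) (ε / ‖c‖) (by positivity)
  refine ⟨c • y', ?_, ?_⟩
  · have he : x - c • y' = c • (c⁻¹ • x - y') := by
      rw [smul_sub, smul_inv_smul₀ hcne]
    rw [he, norm_smul]
    calc ‖c‖ * ‖c⁻¹ • x - y'‖ < ‖c‖ * (ε / ‖c‖) := mul_lt_mul_of_pos_left hy' hc0
      _ = ε := by field_simp
  · refine le_antisymm udens_le_one ?_
    rw [← hud]
    apply udens_mono
    rintro t ⟨ht1, ht2⟩
    refine ⟨ht1, ?_⟩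
    have he : S.T t x - S.T t (c • y') = c • (S.T t (c⁻¹ • x) - S.T t y') := by
      rw [_root_.map_smul, smul_sub, _root_.map_smul, smul_inv_smul₀ hcne]
    rw [he, norm_smul]
    calc M ≤ |M| := le_abs_self M
      _ < ((|M| + 1) / δ) * δ := by
          rw [div_mul_cancel₀ _ hδ.ne']; linarith
      _ ≤ ‖c‖ * δ := mul_le_mul_of_nonneg_right hc.le hδ.le
      _ ≤ ‖c‖ * ‖S.T t (c⁻¹ • x) - S.T t y'‖ :=
          mul_le_mul_of_nonneg_left ht2.le hc0.le

def Yset (S : CZeroSemigroup α 𝕜 X) (m n : ℕ) : Set X :=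
  {x | ∃ r : ℝ, (n:ℝ) ≤ r ∧
    1 - 1/((n:ℝ)+1) < dratio α {t ∈ sector α | (m:ℝ) < ‖S.T t x‖} r}

lemma isOpen_Yset (hα0 : 0 < α) (hαπ : α < Real.pi / 2) [CompleteSpace X]
    (S : CZeroSemigroup α 𝕜 X) (m n : ℕ) : IsOpen (Yset S m n) := by
  have hαpi : α ≤ Real.pi := by linarith [Real.pi_pos]
  rw [Metric.isOpen_iff]
  rintro x ⟨r, hrn, hrd⟩
  set B := {t ∈ sector α | (m:ℝ) < ‖S.T t x‖} with hB
  set V := (volume (sectorBall α r)).toReal with hV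
  have hV0 : 0 < V := by
    rcases lt_or_ge 0 V with h | h
    · exact h
    · exfalso
      have hz : V = 0 := le_antisymm h ENNReal.toReal_nonneg
      have h1 : dratio α B r = 0 := by unfold dratio; rw [← hV, hz]; simp
      have h2 : (0:ℝ) ≤ 1 - 1/((n:ℝ)+1) := by
        have h3 : 1/((n:ℝ)+1) ≤ 1 := by
          rw [div_le_one (by positivity)]; linarith [Nat.cast_nonneg (α := ℝ) n]
        linarith
      rw [h1] at hrd; linarith
  set E : ℕ → Set ℂ := fun k =>
    {t ∈ sector α | (m:ℝ) + 1/((k:ℝ)+1) ≤ ‖S.T t x‖} ∩ sectorBall α r with hE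
  have hEmeas : ∀ k, MeasurableSet (E k) := fun k =>
    ((isClosed_levelGe hα0.le hαpi S x _).measurableSet).inter
      (measurableSet_sectorBall hα0.le hαpi r)
  have hEmono : Monotone E := by
    rintro i j hij t ⟨⟨ht1, ht2⟩, ht3⟩
    refine ⟨⟨ht1, le_trans (by
      have : 1/((j:ℝ)+1) ≤ 1/((i:ℝ)+1) :=
        one_div_le_one_div_of_le (by positivity) (by have := (Nat.cast_le (α := ℝ)).mpr hij; linarith)
      linarith) ht2⟩, ht3⟩
  have hEunion : ⋃ k, E k = B ∩ sectorBall α r := by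
    ext t
    simp only [mem_iUnion, hE, hB, mem_inter_iff, mem_setOf_eq]
    constructor
    · rintro ⟨k, ⟨⟨h1, h2⟩, h3⟩⟩
      refine ⟨⟨h1, lt_of_lt_of_le ?_ h2⟩, h3⟩
      have : (0:ℝ) < 1/((k:ℝ)+1) := by positivity
      linarith
    · rintro ⟨⟨h1, h2⟩, h3⟩
      obtain ⟨k, hk⟩ := exists_nat_one_div_lt (sub_pos.mpr h2)
      exact ⟨k, ⟨⟨h1, by linarith⟩, h3⟩⟩
  have hfin : volume (B ∩ sectorBall α r) ≠ ⊤ :=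
    (lt_of_le_of_lt (measure_mono inter_subset_right) volume_sectorBall_lt_top).ne
  have htd : Tendsto (fun k => (volume (E k)).toReal) atTop
      (nhds (volume (B ∩ sectorBall α r)).toReal) := by
    have h1 := tendsto_measure_iUnion_atTop (μ := (volume : Measure ℂ)) hEmono
    rw [hEunion] at h1
    exact (ENNReal.tendsto_toReal hfin).comp h1
  have hlim : (1 - 1/((n:ℝ)+1)) * V < (volume (B ∩ sectorBall α r)).toReal := by
    have h1 := hrd
    unfold dratio at h1
    rw [← hV, lt_div_iff₀ hV0] at h1
    exact h1
  obtain ⟨k, hk⟩ := (htd.eventually (eventually_gt_nhds hlim)).exists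
  obtain ⟨M, hM0, hM⟩ := exists_opNorm_bound hα0.le hαpi S r
  set η := 1/(((k:ℝ)+1) * (M+1)) with hη
  have hη0 : 0 < η := by positivity
  refine ⟨η, hη0, fun x' hx' => ?_⟩
  refine ⟨r, hrn, ?_⟩
  have hsub : E k ⊆ {t ∈ sector α | (m:ℝ) < ‖S.T t x'‖} ∩ sectorBall α r := by
    rintro t ⟨⟨ht1, ht2⟩, ht3⟩
    refine ⟨⟨ht1, ?_⟩, ht3⟩
    have hball : t ∈ sector α ∩ Metric.closedBall 0 r :=
      ⟨ht1, by simpa [Metric.mem_closedBall, Complex.dist_eq] using ht3.2.le⟩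
    have h2 : ‖x' - x‖ < η := by rwa [Metric.mem_ball, dist_eq_norm] at hx'
    have h1 : ‖S.T t x' - S.T t x‖ ≤ M * η := by
      rw [← map_sub]
      calc ‖S.T t (x' - x)‖ ≤ ‖S.T t‖ * ‖x' - x‖ := (S.T t).le_opNorm _
        _ ≤ M * η := mul_le_mul (hM t hball) h2.le (norm_nonneg _) hM0
    have h3 : M * η < 1/((k:ℝ)+1) := by
      rw [hη, mul_one_div, div_lt_div_iff₀ (by positivity) (by positivity)]
      nlinarith [Nat.cast_nonneg (α := ℝ) k]
    have h4 : ‖S.T t x‖ - ‖S.T t x' - S.T t x‖ ≤ ‖S.T t x'‖ := by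
      have := norm_sub_norm_le (S.T t x) (S.T t x')
      have h5 : ‖S.T t x - S.T t x'‖ = ‖S.T t x' - S.T t x‖ := norm_sub_rev _ _
      linarith
    linarith
  have hmono : (volume (E k)).toReal ≤
      (volume ({t ∈ sector α | (m:ℝ) < ‖S.T t x'‖} ∩ sectorBall α r)).toReal :=
    ENNReal.toReal_mono
      ((lt_of_le_of_lt (measure_mono inter_subset_right) volume_sectorBall_lt_top).ne)
      (measure_mono hsub)
  unfold dratio
  rw [← hV, lt_div_iff₀ hV0]
  linarith

lemma dense_Yset (hα0 : 0 < α) (hαπ : α < Real.pi / 2)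
    (S : CZeroSemigroup α 𝕜 X) (hS : DistSensitive S) (m n : ℕ) :
    Dense (Yset S m n) := by
  have hαpi : α ≤ Real.pi := by linarith [Real.pi_pos]
  rw [Metric.dense_iff]
  intro x ε hε
  obtain ⟨ξ, hξ⟩ := NormedField.exists_one_lt_norm 𝕜
  have hξ0 : 0 < ‖ξ‖ := lt_trans one_pos hξ
  set N := 3 * (n + 1) with hN
  set M := (2*(m:ℝ) + 1) / (‖ξ‖ - 1) with hM
  obtain ⟨y, hy, hud⟩ := sensitive_amp S hS M x (ε / (2 * ‖ξ‖^N)) (by positivity)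
  set v := x - y with hv
  set S₀ := {t ∈ sector α | M < ‖S.T t x - S.T t y‖} with hS₀
  have hS₀' : S₀ = {t ∈ sector α | M < ‖S.T t v‖} := by
    ext t; simp only [hS₀, hv, mem_setOf_eq, map_sub]
  have hS₀meas : MeasurableSet S₀ := by
    rw [hS₀']; exact measurableSet_levelGt hα0.le hαpi S v M
  set p : ℕ → X := fun j => x + ξ^j • v with hp
  have hpball : ∀ j, j < N → p j ∈ Metric.ball x ε := by
    intro j hj
    rw [Metric.mem_ball, dist_eq_norm, hp]
    have he : x + ξ^j • v - x = ξ^j • v := by abel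
    rw [he, norm_smul, norm_pow]
    have h1 : ‖ξ‖^j ≤ ‖ξ‖^N := pow_le_pow_right₀ hξ.le hj.le
    have h2 : ‖v‖ < ε / (2 * ‖ξ‖^N) := hy
    have h3 : (0:ℝ) < ‖ξ‖^N := by positivity
    calc ‖ξ‖^j * ‖v‖ ≤ ‖ξ‖^N * ‖v‖ := mul_le_mul_of_nonneg_right h1 (norm_nonneg _)
      _ < ‖ξ‖^N * (ε / (2 * ‖ξ‖^N)) := mul_lt_mul_of_pos_left h2 h3
      _ = ε / 2 := by field_simp
      _ < ε := by linarith
  have hclaim : ∃ j, j < N ∧ p j ∈ Yset S m n := by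
    by_contra hcon
    push_neg at hcon
    have hcon' : ∀ j, j < N → ∀ r : ℝ, (n:ℝ) ≤ r →
        dratio α {t ∈ sector α | (m:ℝ) < ‖S.T t (p j)‖} r ≤ 1 - 1/((n:ℝ)+1) := by
      intro j hj r hr
      have := hcon j hj
      rw [Yset, mem_setOf_eq] at this
      push_neg at this
      exact this r hr
    set β := 1/(2*((n:ℝ)+1)) with hβ
    have hβ0 : 0 < β := by positivity
    obtain ⟨r, hrR, hrd⟩ := exists_dratio hud hβ0 (max (n:ℝ) 1)
    have hrn : (n:ℝ) ≤ r := le_trans (le_max_left _ _) hrR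
    have hr1 : (1:ℝ) ≤ r := le_trans (le_max_right _ _) hrR
    set V := (volume (sectorBall α r)).toReal with hV
    have hV0 : 0 < V :=
      ENNReal.toReal_pos (volume_sectorBall_pos hα0 hαπ (by linarith)).ne'
        volume_sectorBall_lt_top.ne
    have hfinΔ : volume (sectorBall α r) ≠ ⊤ := volume_sectorBall_lt_top.ne
    -- bad sets
    set bad : ℕ → Set ℂ := fun j =>
      ({t ∈ sector α | ‖S.T t (p j)‖ ≤ (m:ℝ)} ∩ sectorBall α r) ∩ S₀ with hbad
    have hbadmeas : ∀ j, MeasurableSet (bad j) := fun j =>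
      (((isClosed_levelLe hα0.le hαpi S (p j) _).measurableSet).inter
        (measurableSet_sectorBall hα0.le hαpi r)).inter hS₀meas
    have hfinsub : ∀ (W : Set ℂ), W ⊆ sectorBall α r → volume W ≠ ⊤ := fun W hW =>
      (lt_of_le_of_lt (measure_mono hW) volume_sectorBall_lt_top).ne
    -- step 1+2 : vol(badfull j) ≥ V/(n+1)
    have hstep2 : ∀ j, j < N →
        V * (1/((n:ℝ)+1)) ≤ (volume ({t ∈ sector α | ‖S.T t (p j)‖ ≤ (m:ℝ)} ∩ sectorBall α r)).toReal := by
      intro j hj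
      have h1 := hcon' j hj r hrn
      rw [dratio, ← hV, div_le_iff₀ hV0] at h1
      have hcover : sectorBall α r ⊆
          ({t ∈ sector α | (m:ℝ) < ‖S.T t (p j)‖} ∩ sectorBall α r) ∪
          ({t ∈ sector α | ‖S.T t (p j)‖ ≤ (m:ℝ)} ∩ sectorBall α r) := by
        intro t ht
        rcases lt_or_ge (m:ℝ) ‖S.T t (p j)‖ with h | h
        · exact Or.inl ⟨⟨ht.1, h⟩, ht⟩
        · exact Or.inr ⟨⟨ht.1, h⟩, ht⟩
      have h2 := (measure_mono (μ := (volume : Measure ℂ)) hcover).trans (measure_union_le _ _)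
      have h3 := ENNReal.toReal_mono (by
          rw [ENNReal.add_ne_top]
          exact ⟨hfinsub _ inter_subset_right, hfinsub _ inter_subset_right⟩) h2
      rw [ENNReal.toReal_add (hfinsub _ inter_subset_right) (hfinsub _ inter_subset_right)] at h3
      rw [← hV] at h3
      nlinarith [h3, h1]
    -- step 3 : vol(Δr \ S₀) ≤ β V
    have hstep3 : (volume (sectorBall α r \ S₀)).toReal ≤ β * V := by
      have h1 := measure_inter_add_diff (μ := (volume : Measure ℂ)) (sectorBall α r) hS₀meas
      have h2 : (volume (sectorBall α r ∩ S₀)).toReal + (volume (sectorBall α r \ S₀)).toReal = V := by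
        rw [← ENNReal.toReal_add (hfinsub _ inter_subset_left) (hfinsub _ diff_subset), h1, hV]
      have h3 : (1 - β) * V < (volume (S₀ ∩ sectorBall α r)).toReal := by
        have := hrd
        rw [dratio, ← hV, lt_div_iff₀ hV0] at this
        exact this
      rw [inter_comm] at h3
      linarith
    -- step 4 : vol(bad j) ≥ β V
    have hstep4 : ∀ j, j < N → β * V ≤ (volume (bad j)).toReal := by
      intro j hj
      have hcover : {t ∈ sector α | ‖S.T t (p j)‖ ≤ (m:ℝ)} ∩ sectorBall α r ⊆
          bad j ∪ (sectorBall α r \ S₀) := by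
        intro t ht
        by_cases htS : t ∈ S₀
        · exact Or.inl ⟨ht, htS⟩
        · exact Or.inr ⟨ht.2, htS⟩
      have h2 := (measure_mono (μ := (volume : Measure ℂ)) hcover).trans (measure_union_le _ _)
      have hfb : volume (bad j) ≠ ⊤ := hfinsub _ (fun t ht => ht.1.2)
      have hfd : volume (sectorBall α r \ S₀) ≠ ⊤ := hfinsub _ diff_subset
      have h3 := ENNReal.toReal_mono (by rw [ENNReal.add_ne_top]; exact ⟨hfb, hfd⟩) h2
      rw [ENNReal.toReal_add hfb hfd] at h3
      have h4 := hstep2 j hj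
      have hβhalf : 1/((n:ℝ)+1) = 2 * β := by rw [hβ]; field_simp
      nlinarith [h3, h4, hstep3]
    -- step 5 : pairwise disjoint
    have hsep : ∀ i j : ℕ, i < j → ‖ξ‖ - 1 ≤ ‖ξ^j - ξ^i‖ := by
      intro i j hij
      have hexp : i + (j - i) = j := by omega
      have he : ξ^j - ξ^i = ξ^i * (ξ^(j-i) - 1) := by
        rw [mul_sub, mul_one, ← pow_add, hexp]
      rw [he, norm_mul, norm_pow]
      have h1 : (1:ℝ) ≤ ‖ξ‖^i := one_le_pow₀ hξ.le
      have h2 : ‖ξ‖ - 1 ≤ ‖ξ^(j-i) - 1‖ := by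
        have h3 := norm_sub_norm_le (ξ^(j-i)) 1
        have h4 : ‖ξ‖ ≤ ‖ξ^(j-i)‖ := by
          rw [norm_pow]
          exact le_self_pow₀ hξ.le (by omega)
        simp only [norm_one] at h3
        linarith
      nlinarith [norm_nonneg (ξ^(j-i) - 1)]
    have hdisj : (↑(Finset.range N) : Set ℕ).PairwiseDisjoint bad := by
      intro i _ j _ hij
      rw [Function.onFun, Set.disjoint_left]
      rintro t ⟨⟨⟨hts, hti⟩, htr⟩, htS⟩ ⟨⟨⟨_, htj⟩, _⟩, _⟩
      rw [hS₀'] at htS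
      have htv : M < ‖S.T t v‖ := htS.2
      have he : S.T t (p i) - S.T t (p j) = (ξ^i - ξ^j) • S.T t v := by
        rw [← map_sub, ← _root_.map_smul]
        congr 1
        rw [hp]
        simp only []
        rw [sub_smul]
        abel
      have hnorm : ‖S.T t (p i) - S.T t (p j)‖ ≤ 2*(m:ℝ) := by
        calc ‖S.T t (p i) - S.T t (p j)‖ ≤ ‖S.T t (p i)‖ + ‖S.T t (p j)‖ := norm_sub_le _ _
          _ ≤ 2*(m:ℝ) := by linarith
      have hsep' : ‖ξ‖ - 1 ≤ ‖ξ^i - ξ^j‖ := by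
        rcases lt_or_gt_of_ne hij with h | h
        · rw [norm_sub_rev]; exact hsep i j h
        · exact hsep j i h
      have hMv : (2*(m:ℝ) + 1) < ‖ξ^i - ξ^j‖ * ‖S.T t v‖ := by
        have hξ1 : (0:ℝ) < ‖ξ‖ - 1 := by linarith
        have h1 : (‖ξ‖ - 1) * M = 2*(m:ℝ) + 1 := by
          rw [hM, mul_div_cancel₀ _ hξ1.ne']
        calc (2*(m:ℝ)+1) = (‖ξ‖-1) * M := h1.symm
          _ < (‖ξ‖-1) * ‖S.T t v‖ := by
              apply mul_lt_mul_of_pos_left htv hξ1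
          _ ≤ ‖ξ^i - ξ^j‖ * ‖S.T t v‖ := by
              apply mul_le_mul_of_nonneg_right hsep' (norm_nonneg _)
      rw [he, norm_smul] at hnorm
      linarith
    -- step 6 : sum up
    have hsum : ∑ j ∈ Finset.range N, volume (bad j) ≤ volume (sectorBall α r) := by
      rw [← measure_biUnion_finset hdisj (fun j _ => hbadmeas j)]
      exact measure_mono (by
        intro t ht
        simp only [Finset.mem_coe, mem_iUnion] at ht
        obtain ⟨j, _, htj⟩ := ht
        exact htj.1.2)
    have hsum' : ∑ j ∈ Finset.range N, (volume (bad j)).toReal ≤ V := by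
      rw [← ENNReal.toReal_sum (fun j _ => hfinsub _ (fun t ht => ht.1.2))]
      exact ENNReal.toReal_mono hfinΔ hsum
    have hlower : (N:ℝ) * (β * V) ≤ ∑ j ∈ Finset.range N, (volume (bad j)).toReal := by
      calc (N:ℝ) * (β * V) = ∑ _j ∈ Finset.range N, β * V := by
            rw [Finset.sum_const, Finset.card_range, nsmul_eq_mul]
        _ ≤ _ := Finset.sum_le_sum (fun j hj => hstep4 j (Finset.mem_range.mp hj))
    have hNβ : (N:ℝ) * β = 3/2 := by
      rw [hβ, hN]
      push_cast
      field_simp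
    have hfinal : (3/2 : ℝ) * V ≤ V := by
      calc (3/2:ℝ) * V = (N:ℝ) * β * V := by rw [hNβ]
        _ = (N:ℝ) * (β * V) := by ring
        _ ≤ ∑ j ∈ Finset.range N, (volume (bad j)).toReal := hlower
        _ ≤ V := hsum'
    linarith only [hfinal, hV0]
  obtain ⟨j, hj, hjY⟩ := hclaim
  exact ⟨p j, hpball j hj, hjY⟩

lemma mem_Yset_of_unbounded (hα0 : 0 < α) (hαπ : α < Real.pi / 2)
    (S : CZeroSemigroup α 𝕜 X) {x : X} (h : DistUnbounded S x) (m n : ℕ) :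
    x ∈ Yset S m n := by
  obtain ⟨A, hAsub, hAmeas, hAud, htend⟩ := h
  have hev : ∀ᶠ t in alongAbs A, (m:ℝ) < ‖S.T t x‖ := by
    filter_upwards [htend.eventually_ge_atTop ((m:ℝ)+1)] with t ht
    linarith
  obtain ⟨R, hR⟩ := eventually_alongAbs_iff.mp hev
  have hsub : A \ Metric.closedBall 0 R ⊆ {t ∈ sector α | (m:ℝ) < ‖S.T t x‖} := by
    rintro t ⟨htA, htR⟩
    refine ⟨hAsub htA, hR t htA ?_⟩
    by_contra hcon; push_neg at hcon
    exact htR (by simpa [Metric.mem_closedBall, Complex.dist_eq] using hcon.le)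
  have hud' : udens α {t ∈ sector α | (m:ℝ) < ‖S.T t x‖} = 1 :=
    le_antisymm udens_le_one (by
      calc (1:ℝ) = udens α (A \ Metric.closedBall 0 R) :=
          (udens_diff_closedBall hα0 hαπ hAud R).symm
        _ ≤ _ := udens_mono hsub)
  obtain ⟨r, hr, hrd⟩ := exists_dratio hud'
    (show (0:ℝ) < 1/((n:ℝ)+1) by positivity) (n:ℝ)
  exact ⟨r, hr, hrd⟩

lemma unbounded_of_mem_all_Yset (hα0 : 0 < α) (hαπ : α < Real.pi / 2)
    (S : CZeroSemigroup α 𝕜 X) {x : X} (h : ∀ m n : ℕ, x ∈ Yset S m n) :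
    DistUnbounded S x := by
  have hαpi : α ≤ Real.pi := by linarith [Real.pi_pos]
  set Bm : ℕ → Set ℂ := fun m => {t ∈ sector α | (m:ℝ) < ‖S.T t x‖} with hBm
  have hBmeas : ∀ m, MeasurableSet (Bm m) := fun m => measurableSet_levelGt hα0.le hαpi S x m
  -- star property
  have hstar : ∀ (m : ℕ) (ε R : ℝ), 0 < ε → ∃ r, R ≤ r ∧ 1 - ε < dratio α (Bm m) r := by
    intro m ε R hε
    obtain ⟨n, hn⟩ := exists_nat_gt (max R (1/ε))
    have hn1 : R < (n:ℝ) := lt_of_le_of_lt (le_max_left _ _) hn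
    have hn2 : 1/ε < (n:ℝ) := lt_of_le_of_lt (le_max_right _ _) hn
    obtain ⟨r, hr1, hr2⟩ := h m n
    refine ⟨r, le_trans hn1.le hr1, lt_of_le_of_lt ?_ hr2⟩
    have h1 : 1/((n:ℝ)+1) < ε := by
      rw [div_lt_iff₀ (by positivity)]
      rw [div_lt_iff₀ hε] at hn2
      nlinarith
    linarith
  -- recursive radii
  have hstep : ∀ (k : ℕ) (prev : ℝ), ∃ r' : ℝ, prev + 1 ≤ r' ∧ (k:ℝ) + 1 ≤ r' ∧
      1 - 1/((k:ℝ)+2) < dratio α (Bm (k+1)) r' ∧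
      (volume (sectorBall α prev)).toReal ≤ (1/((k:ℝ)+2)) * (volume (sectorBall α r')).toReal := by
    intro k prev
    obtain ⟨ρ, hρ⟩ := eventually_atTop.mp
      ((volume_sectorBall_tendsto hα0 hαπ).eventually_ge_atTop
        (((k:ℝ)+2) * (volume (sectorBall α prev)).toReal))
    obtain ⟨r', hr1, hr2⟩ := hstar (k+1) (1/((k:ℝ)+2))
      (max (max (prev + 1) ((k:ℝ)+1)) ρ) (by positivity)
    have hρr : ρ ≤ r' := le_trans (le_max_right _ _) hr1
    refine ⟨r', le_trans (le_trans (le_max_left _ _) (le_max_left _ _)) hr1,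
      le_trans (le_trans (le_max_right _ _) (le_max_left _ _)) hr1, by
        have : ((k+1:ℕ):ℝ) = (k:ℝ) + 1 := by push_cast; ring
        convert hr2 using 3 <;> push_cast <;> ring, ?_⟩
    have h1 := hρ r' hρr
    rw [one_div, inv_mul_eq_div, le_div_iff₀ (by positivity : (0:ℝ) < (k:ℝ)+2)]
    nlinarith [h1]
  choose f hf1 hf2 hf3 hf4 using hstep
  set r : ℕ → ℝ := fun k => Nat.rec (1:ℝ) (fun k prev => f k prev) k with hrdef
  have hr0 : r 0 = 1 := rfl
  have hrsucc : ∀ k, r (k+1) = f k (r k) := fun k => rfl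
  have hrmono : StrictMono r := by
    apply strictMono_nat_of_lt_succ
    intro k
    rw [hrsucc]
    linarith [hf1 k (r k)]
  have hrge : ∀ k : ℕ, (k:ℝ) ≤ r k := by
    intro k
    cases k with
    | zero => simp [hr0]
    | succ k => rw [hrsucc]; push_cast; linarith [hf2 k (r k)]
  have hr1' : ∀ k : ℕ, (1:ℝ) ≤ r k := by
    intro k
    cases k with
    | zero => simp [hr0]
    | succ k =>
        have := hrge (k+1)
        push_cast at this
        linarith [Nat.cast_nonneg (α := ℝ) k]
  set A : Set ℂ := ⋃ k, ((Bm (k+1) ∩ sectorBall α (r (k+1))) \ sectorBall α (r k)) with hA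
  have hAsub : A ⊆ sector α := by
    rintro t ht
    obtain ⟨k, hk⟩ := mem_iUnion.mp ht
    exact hk.1.1.1
  have hAmeas : MeasurableSet A := by
    apply MeasurableSet.iUnion
    intro k
    exact ((hBmeas (k+1)).inter (measurableSet_sectorBall hα0.le hαpi _)).diff
      (measurableSet_sectorBall hα0.le hαpi _)
  refine ⟨A, hAsub, hAmeas, ?_, ?_⟩
  · -- udens A = 1
    apply udens_eq_one_of_frequently
    intro ε hε
    rw [frequently_atTop]
    intro R₀
    obtain ⟨k, hk⟩ := exists_nat_gt (max R₀ (2/ε))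
    have hk1 : R₀ < (k:ℝ) := lt_of_le_of_lt (le_max_left _ _) hk
    have hk2 : 2/ε < (k:ℝ) := lt_of_le_of_lt (le_max_right _ _) hk
    have hk0 : (0:ℝ) ≤ (k:ℝ) := Nat.cast_nonneg k
    refine ⟨r (k+1), ?_, ?_⟩
    · calc R₀ ≤ (k:ℝ) := hk1.le
        _ ≤ (k:ℝ) + 1 := by linarith
        _ ≤ r (k+1) := by
            have := hrge (k+1); push_cast at this; linarith
    · -- density bound at r (k+1)
      set s := r (k+1) with hs
      set Vs := (volume (sectorBall α s)).toReal with hVs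
      have hVs0 : 0 < Vs :=
        ENNReal.toReal_pos (volume_sectorBall_pos hα0 hαπ (by linarith [hr1' (k+1)])).ne'
          volume_sectorBall_lt_top.ne
      have hfinsub : ∀ (W : Set ℂ), W ⊆ sectorBall α s → volume W ≠ ⊤ := fun W hW =>
        (lt_of_le_of_lt (measure_mono hW) volume_sectorBall_lt_top).ne
      have hpiece : (Bm (k+1) ∩ sectorBall α s) \ sectorBall α (r k) ⊆ A ∩ sectorBall α s := by
        intro t ht
        exact ⟨mem_iUnion.mpr ⟨k, ht⟩, ht.1.2⟩
      have hnum : (volume (Bm (k+1) ∩ sectorBall α s)).toReal -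
          (volume (sectorBall α (r k))).toReal ≤ (volume (A ∩ sectorBall α s)).toReal := by
        have hcover : Bm (k+1) ∩ sectorBall α s ⊆
            ((Bm (k+1) ∩ sectorBall α s) \ sectorBall α (r k)) ∪ sectorBall α (r k) := by
          intro t ht
          by_cases htr : t ∈ sectorBall α (r k)
          · exact Or.inr htr
          · exact Or.inl ⟨ht, htr⟩
        have h2 := (measure_mono (μ := (volume : Measure ℂ)) hcover).trans (measure_union_le _ _)
        have hfa : volume ((Bm (k+1) ∩ sectorBall α s) \ sectorBall α (r k)) ≠ ⊤ :=
          hfinsub _ (fun t ht => ht.1.2)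
        have h3 := ENNReal.toReal_mono (by
            rw [ENNReal.add_ne_top]; exact ⟨hfa, volume_sectorBall_lt_top.ne⟩) h2
        rw [ENNReal.toReal_add hfa volume_sectorBall_lt_top.ne] at h3
        have h4 : (volume ((Bm (k+1) ∩ sectorBall α s) \ sectorBall α (r k))).toReal ≤
            (volume (A ∩ sectorBall α s)).toReal :=
          ENNReal.toReal_mono (hfinsub _ inter_subset_right) (measure_mono hpiece)
        linarith
      have hBig : (1 - 1/((k:ℝ)+2)) * Vs < (volume (Bm (k+1) ∩ sectorBall α s)).toReal := by
        have := hf3 k (r k)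
        rw [← hrsucc, ← hs, dratio, ← hVs, lt_div_iff₀ hVs0] at this
        exact this
      have hSmall : (volume (sectorBall α (r k))).toReal ≤ (1/((k:ℝ)+2)) * Vs := by
        have := hf4 k (r k)
        rw [← hrsucc, ← hs, ← hVs] at this
        exact this
      have hfrac : 2/((k:ℝ)+2) < ε := by
        rw [div_lt_iff₀ (by positivity)]
        rw [div_lt_iff₀ hε] at hk2
        nlinarith
      rw [dratio, ← hVs, lt_div_iff₀ hVs0]
      have c0 : (0:ℝ) < (ε - 2/((k:ℝ)+2)) * Vs := mul_pos (sub_pos.mpr hfrac) hVs0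
      have he1 : (1 - 1/((k:ℝ)+2)) * Vs = Vs - 1/((k:ℝ)+2) * Vs := by ring
      have he2 : (1-ε)*Vs = Vs - ε*Vs := by ring
      have he3 : (ε - 2/((k:ℝ)+2))*Vs = ε*Vs - 2*(1/((k:ℝ)+2) * Vs) := by ring
      linarith only [hnum, hBig, hSmall, c0, he1, he2, he3]
  · -- tendsto
    rw [Filter.tendsto_atTop]
    intro b
    apply eventually_alongAbs_iff.mpr
    obtain ⟨K, hK⟩ := exists_nat_gt b
    refine ⟨r K, fun t htA habs => ?_⟩
    obtain ⟨k, hk⟩ := mem_iUnion.mp htA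
    have htB : t ∈ Bm (k+1) := hk.1.1
    have htlt : ‖t‖ < r (k+1) := hk.1.2.2
    have htge : r k ≤ ‖t‖ := by
      by_contra hcon; push_neg at hcon
      exact hk.2 ⟨hk.1.1.1, hcon⟩
    have hKk : K ≤ k := by
      by_contra hcon; push_neg at hcon
      have : r (k+1) ≤ r K := hrmono.monotone hcon
      linarith
    have : ((k:ℝ)+1) < ‖S.T t x‖ := by
      have := htB.2
      push_cast at this
      linarith
    calc b ≤ (K:ℝ) := hK.le
      _ ≤ (k:ℝ) := by exact_mod_cast Nat.cast_le.mpr hKk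
      _ ≤ ‖S.T t x‖ := by linarith

/-- Characterization of distributional sensitivity via distributionally unbounded vectors. -/
theorem stmt_4 (α : ℝ) (hα : 0 < α) (hα' : α < Real.pi / 2)
    {𝕜 X : Type*} [NontriviallyNormedField 𝕜] [NormedAddCommGroup X] [NormedSpace 𝕜 X]
    [CompleteSpace X] (S : CZeroSemigroup α 𝕜 X) :
    (DistSensitive S ↔ ∃ x : X, DistUnbounded S x) ∧
    (DistSensitive S ↔
      (IsGδ {x : X | DistUnbounded S x} ∧ Dense {x : X | DistUnbounded S x})) := by
  have hnonempty : Nonempty X := ⟨0⟩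
  have hD : {x : X | DistUnbounded S x} = ⋂ m : ℕ, ⋂ n : ℕ, Yset S m n := by
    ext x
    simp only [mem_setOf_eq, mem_iInter]
    exact ⟨fun h m n => mem_Yset_of_unbounded hα hα' S h m n,
           fun h => unbounded_of_mem_all_Yset hα hα' S h⟩
  have hGD : DistSensitive S →
      IsGδ {x : X | DistUnbounded S x} ∧ Dense {x : X | DistUnbounded S x} := by
    intro hS
    constructor
    · rw [hD]
      exact IsGδ.iInter fun m => IsGδ.iInter fun n => (isOpen_Yset hα hα' S m n).isGδ
    · rw [hD]
      have heq : (⋂ m : ℕ, ⋂ n : ℕ, Yset S m n) = ⋂ p : ℕ × ℕ, Yset S p.1 p.2 := by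
        ext x
        simp only [mem_iInter]
        exact ⟨fun h p => h p.1 p.2, fun h m n => h (m, n)⟩
      rw [heq]
      exact dense_iInter_of_isOpen (fun p => isOpen_Yset hα hα' S p.1 p.2)
        (fun p => dense_Yset hα hα' S hS p.1 p.2)
  constructor
  · constructor
    · intro hS
      obtain ⟨x, hx⟩ := (hGD hS).2.nonempty
      exact ⟨x, hx⟩
    · exact fun h => sensitive_of_unbounded hα hα' S h
  · constructor
    · exact hGD
    · rintro ⟨-, hdense⟩
      obtain ⟨x, hx⟩ := hdense.nonempty
      exact sensitive_of_unbounded hα hα' S ⟨x, hx⟩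
end
end
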